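/- Let φ, φ' : ℝ^m → ℤ be finitely presented functions and let M > 0. Then ∫_{[−M,M]^m} |φ(t) − φ'(t)| dt ≤ (2M)^{m−1} · d(φ, φ'), as an inequality in [0, +∞]. -/

import Mathlib

open MeasureTheory
open scoped Classical ENNReal

/-- Indicator of the upper set `Q_u = {t | u ≤ t}` (coordinatewise order on `ℝ^m`). -/
noncomputable def indQ {m : ℕ} (u t : Fin m → ℝ) : ℤ := if u ≤ t then 1 else 0

/-- `(P, N)` is a decomposition of `φ` if `φ = Σ_{u ∈ P} 1_{Q_u} − Σ_{v ∈ N} 1_{Q_v}`. -/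
def IsDecomp {m : ℕ} (φ : (Fin m → ℝ) → ℤ) (P N : Multiset (Fin m → ℝ)) : Prop :=
  ∀ t, φ t = (P.map fun u => indQ u t).sum - (N.map fun u => indQ u t).sum

/-- A function `φ : ℝ^m → ℤ` is finitely presented if it admits a decomposition. -/
def FinitelyPresented {m : ℕ} (φ : (Fin m → ℝ) → ℤ) : Prop := ∃ P N, IsDecomp φ P N

/-- The ℓ¹ distance on `ℝ^m`. -/
noncomputable def l1 {m : ℕ} (u v : Fin m → ℝ) : ℝ := ∑ i, |u i - v i|

/-- The signed 1-Wasserstein distance between finitely presented functions: the infimum in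
`[0,∞]` over decompositions `(P,N)` of `φ`, `(P',N')` of `φ'` and multiset bijections
`h : P ⊔ N' → N ⊔ P'` (encoded as a multiset `pr` of pairs) of the cost
`Σ_u ‖u − h u‖₁`; the infimum of the empty set is `+∞`. -/
noncomputable def signedWassDist {m : ℕ} (φ φ' : (Fin m → ℝ) → ℤ) : ℝ≥0∞ :=
  sInf { c : ℝ≥0∞ | ∃ (P N P' N' : Multiset (Fin m → ℝ))
      (pr : Multiset ((Fin m → ℝ) × (Fin m → ℝ))),
      IsDecomp φ P N ∧ IsDecomp φ' P' N' ∧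
      pr.map Prod.fst = P + N' ∧ pr.map Prod.snd = N + P' ∧
      c = ENNReal.ofReal ((pr.map fun uv => l1 uv.1 uv.2).sum) }

lemma measurableSet_Qu {m : ℕ} (u : Fin m → ℝ) : MeasurableSet {t : Fin m → ℝ | u ≤ t} := by
  have h : {t : Fin m → ℝ | u ≤ t} = ⋂ i, (fun t : Fin m → ℝ => t i) ⁻¹' Set.Ici (u i) := by
    ext t; simp [Pi.le_def, Set.mem_iInter]
  rw [h]
  exact MeasurableSet.iInter fun i => (measurable_pi_apply i) measurableSet_Ici

lemma measurable_indQ {m : ℕ} (u : Fin m → ℝ) : Measurable fun t => ((indQ u t : ℤ) : ℝ) := by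
  have : (fun t => ((indQ u t : ℤ) : ℝ)) = fun t => if u ≤ t then (1:ℝ) else 0 := by
    funext t; unfold indQ; split <;> simp
  rw [this]
  exact Measurable.ite (measurableSet_Qu u) measurable_const measurable_const

lemma pairBound {m : ℕ} (M : ℝ) (hM : 0 < M) (u v : Fin m → ℝ) :
    ∫⁻ t in (Set.Icc (fun _ => -M) (fun _ => M) : Set (Fin m → ℝ)),
      ENNReal.ofReal |((indQ u t : ℝ)) - ((indQ v t : ℝ))|
    ≤ ENNReal.ofReal ((2*M)^(m-1)) * ENNReal.ofReal (l1 u v) := by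
  set box : Set (Fin m → ℝ) := Set.Icc (fun _ => -M) (fun _ => M) with hboxdef
  set S : Fin m → Set (Fin m → ℝ) :=
    fun i => (fun t : Fin m → ℝ => t i) ⁻¹' Set.Ico (min (u i) (v i)) (max (u i) (v i)) with hS
  have hSmeas : ∀ i, MeasurableSet (S i) := fun i =>
    (measurable_pi_apply i) measurableSet_Ico
  have hUmeas : MeasurableSet (⋃ i, S i) := MeasurableSet.iUnion hSmeas
  have hpt : ∀ t, ENNReal.ofReal |((indQ u t : ℝ)) - ((indQ v t : ℝ))|
      ≤ Set.indicator (⋃ i, S i) (fun _ => (1 : ℝ≥0∞)) t := by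
    intro t
    unfold indQ
    by_cases hu : u ≤ t <;> by_cases hv : v ≤ t
    · simp [hu, hv]
    · have : t ∈ ⋃ i, S i := by
        obtain ⟨i, hi⟩ : ∃ i, ¬ v i ≤ t i := by
          by_contra h; push_neg at h; exact hv h
        refine Set.mem_iUnion.2 ⟨i, ?_⟩
        simp only [hS, Set.mem_preimage, Set.mem_Ico]
        exact ⟨le_trans (min_le_left _ _) (hu i), lt_of_lt_of_le (not_le.1 hi) (le_max_right _ _)⟩
      simp [hu, hv, this]
    · have : t ∈ ⋃ i, S i := by
        obtain ⟨i, hi⟩ : ∃ i, ¬ u i ≤ t i := by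
          by_contra h; push_neg at h; exact hu h
        refine Set.mem_iUnion.2 ⟨i, ?_⟩
        simp only [hS, Set.mem_preimage, Set.mem_Ico]
        exact ⟨le_trans (min_le_right _ _) (hv i), lt_of_lt_of_le (not_le.1 hi) (le_max_left _ _)⟩
      simp [hu, hv, this]
    · simp [hu, hv]
  calc ∫⁻ t in box, ENNReal.ofReal |((indQ u t : ℝ)) - ((indQ v t : ℝ))|
      ≤ ∫⁻ t in box, Set.indicator (⋃ i, S i) (fun _ => (1 : ℝ≥0∞)) t :=
        lintegral_mono hpt
    _ = volume ((⋃ i, S i) ∩ box) := by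
        rw [lintegral_indicator_const hUmeas, one_mul, Measure.restrict_apply hUmeas]
    _ ≤ ∑ i, volume (S i ∩ box) := by
        have : (⋃ i, S i) ∩ box = ⋃ i, (S i ∩ box) := by
          rw [Set.iUnion_inter]
        rw [this]
        exact (measure_iUnion_le _).trans_eq (tsum_fintype _)
    _ ≤ ∑ i, ENNReal.ofReal |u i - v i| * ENNReal.ofReal ((2*M)^(m-1)) := by
        refine Finset.sum_le_sum fun i _ => ?_
        have hbox : box = Set.pi Set.univ (fun _ : Fin m => Set.Icc (-M) M) := by
          rw [Set.pi_univ_Icc]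
        have hinter : S i ∩ box = Set.pi Set.univ
            (fun j => if j = i then Set.Ico (min (u i) (v i)) (max (u i) (v i)) ∩ Set.Icc (-M) M
                      else Set.Icc (-M) M) := by
          rw [hbox]
          ext t
          simp only [hS, Set.mem_inter_iff, Set.mem_preimage, Set.mem_pi, Set.mem_univ,
            true_implies]
          constructor
          · rintro ⟨h1, h2⟩ j
            by_cases hj : j = i
            · subst hj; simp only [if_pos rfl]; exact ⟨h1, h2 j⟩
            · simp only [if_neg hj]; exact h2 j
          · intro h
            refine ⟨?_, fun j => ?_⟩
            · have := h i; rw [if_pos rfl] at this; exact this.1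
            · by_cases hj : j = i
              · subst hj; have := h j; rw [if_pos rfl] at this; exact this.2
              · have := h j; rwa [if_neg hj] at this
        rw [hinter, volume_pi_pi]
        rw [← Finset.mul_prod_erase Finset.univ _ (Finset.mem_univ i)]
        have h2M : volume (Set.Icc (-M) M) = ENNReal.ofReal (2*M) := by
          rw [Real.volume_Icc]; congr 1; ring
        have hprod : ∏ j ∈ Finset.univ.erase i,
            volume ((if j = i then Set.Ico (min (u i) (v i)) (max (u i) (v i)) ∩ Set.Icc (-M) M
                      else Set.Icc (-M) M)) = ENNReal.ofReal ((2*M)^(m-1)) := by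
          have hc : ∀ j ∈ Finset.univ.erase i,
              volume ((if j = i then Set.Ico (min (u i) (v i)) (max (u i) (v i)) ∩ Set.Icc (-M) M
                        else Set.Icc (-M) M)) = ENNReal.ofReal (2*M) := fun j hj => by
            rw [if_neg (Finset.mem_erase.1 hj).1, h2M]
          rw [Finset.prod_congr rfl hc, Finset.prod_const,
            Finset.card_erase_of_mem (Finset.mem_univ i), Finset.card_univ, Fintype.card_fin,
            ← ENNReal.ofReal_pow (by positivity)]
        rw [hprod, if_pos rfl]
        refine mul_le_mul_left ?_ _
        calc volume (Set.Ico (min (u i) (v i)) (max (u i) (v i)) ∩ Set.Icc (-M) M)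
            ≤ volume (Set.Ico (min (u i) (v i)) (max (u i) (v i))) :=
              measure_mono Set.inter_subset_left
          _ = ENNReal.ofReal |u i - v i| := by
              rw [Real.volume_Ico, max_sub_min_eq_abs, abs_sub_comm]
    _ = ENNReal.ofReal ((2*M)^(m-1)) * ENNReal.ofReal (l1 u v) := by
        rw [← Finset.sum_mul, mul_comm, l1,
          ENNReal.ofReal_sum_of_nonneg (fun i _ => abs_nonneg _)]

lemma msum_sub {α : Type*} (s : Multiset α) (f g : α → ℤ) :
    (s.map fun a => f a - g a).sum = (s.map f).sum - (s.map g).sum := by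
  induction s using Multiset.induction_on with
  | empty => simp
  | cons a s ih => simp [ih]; ring

lemma multiset_lintegral_bound {m : ℕ} (box : Set (Fin m → ℝ))
    (pr : Multiset ((Fin m → ℝ) × (Fin m → ℝ))) :
    (∫⁻ t in box,
      ENNReal.ofReal |(((pr.map fun uv => indQ uv.1 t - indQ uv.2 t).sum : ℤ) : ℝ)|)
    ≤ (pr.map fun uv => ∫⁻ t in box,
        ENNReal.ofReal |((indQ uv.1 t : ℝ)) - ((indQ uv.2 t : ℝ))|).sum := by
  induction pr using Multiset.induction_on with
  | empty => simp
  | cons a s ih =>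
    simp only [Multiset.map_cons, Multiset.sum_cons]
    have hmeas : Measurable fun t : Fin m → ℝ =>
        ENNReal.ofReal |((indQ a.1 t : ℝ)) - ((indQ a.2 t : ℝ))| :=
      (((measurable_indQ a.1).sub (measurable_indQ a.2)).abs).ennreal_ofReal
    calc (∫⁻ t in box, ENNReal.ofReal
            |(((indQ a.1 t - indQ a.2 t) + (s.map fun uv => indQ uv.1 t - indQ uv.2 t).sum : ℤ) : ℝ)|)
        ≤ ∫⁻ t in box, (ENNReal.ofReal |((indQ a.1 t : ℝ)) - ((indQ a.2 t : ℝ))|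
            + ENNReal.ofReal |(((s.map fun uv => indQ uv.1 t - indQ uv.2 t).sum : ℤ) : ℝ)|) := by
          refine lintegral_mono fun t => ?_
          have hcast : (((indQ a.1 t - indQ a.2 t)
              + (s.map fun uv => indQ uv.1 t - indQ uv.2 t).sum : ℤ) : ℝ)
              = (((indQ a.1 t : ℝ)) - ((indQ a.2 t : ℝ)))
                + (((s.map fun uv => indQ uv.1 t - indQ uv.2 t).sum : ℤ) : ℝ) := by
            push_cast; ring
          rw [hcast]
          exact (ENNReal.ofReal_le_ofReal (abs_add_le _ _)).trans ENNReal.ofReal_add_le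
      _ = (∫⁻ t in box, ENNReal.ofReal |((indQ a.1 t : ℝ)) - ((indQ a.2 t : ℝ))|)
            + ∫⁻ t in box, ENNReal.ofReal
              |(((s.map fun uv => indQ uv.1 t - indQ uv.2 t).sum : ℤ) : ℝ)| :=
          lintegral_add_left hmeas _
      _ ≤ _ := add_le_add_right ih _

lemma msum_ofReal {α : Type*} (s : Multiset α) (f : α → ℝ) (h : ∀ a, 0 ≤ f a) :
    (s.map fun a => ENNReal.ofReal (f a)).sum = ENNReal.ofReal ((s.map f).sum) := by
  induction s using Multiset.induction_on with
  | empty => simp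
  | cons a s ih =>
    simp only [Multiset.map_cons, Multiset.sum_cons, ih]
    rw [ENNReal.ofReal_add (h a)]
    exact Multiset.sum_nonneg fun x hx => by
      obtain ⟨b, _, rfl⟩ := Multiset.mem_map.1 hx; exact h b

/-- For finitely presented `φ, φ' : ℝ^m → ℤ` and `M > 0`,
`∫_{[−M,M]^m} |φ − φ'| ≤ (2M)^{m−1} ⬝ d(φ, φ')` as an inequality in `[0, +∞]`. -/
theorem stmt2 (m : ℕ) (φ φ' : (Fin m → ℝ) → ℤ)
    (hφ : FinitelyPresented φ) (hφ' : FinitelyPresented φ') (M : ℝ) (hM : 0 < M) :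
    (∫⁻ t in (Set.Icc (fun _ => -M) (fun _ => M) : Set (Fin m → ℝ)),
        ENNReal.ofReal |((φ t - φ' t : ℤ) : ℝ)|)
      ≤ ENNReal.ofReal ((2 * M) ^ (m - 1)) * signedWassDist φ φ' := by
  set box : Set (Fin m → ℝ) := Set.Icc (fun _ => -M) (fun _ => M) with hbox
  set K : ℝ≥0∞ := ENNReal.ofReal ((2 * M) ^ (m - 1)) with hK
  have hK0 : K ≠ 0 := by
    rw [hK, Ne, ENNReal.ofReal_eq_zero, not_le]; positivity
  have hKt : K ≠ ∞ := ENNReal.ofReal_ne_top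
  set LHS : ℝ≥0∞ := ∫⁻ t in box, ENNReal.ofReal |((φ t - φ' t : ℤ) : ℝ)| with hLHS
  set Sset := { c : ℝ≥0∞ | ∃ (P N P' N' : Multiset (Fin m → ℝ))
      (pr : Multiset ((Fin m → ℝ) × (Fin m → ℝ))),
      IsDecomp φ P N ∧ IsDecomp φ' P' N' ∧
      pr.map Prod.fst = P + N' ∧ pr.map Prod.snd = N + P' ∧
      c = ENNReal.ofReal ((pr.map fun uv => l1 uv.1 uv.2).sum) } with hSset
  have hsd : signedWassDist φ φ' = sInf Sset := rfl
  have main : ∀ c ∈ Sset, LHS ≤ K * c := by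
    rintro c ⟨P, N, P', N', pr, h1, h2, hf, hs, rfl⟩
    have hid : ∀ t, φ t - φ' t = (pr.map fun uv => indQ uv.1 t - indQ uv.2 t).sum := by
      intro t
      have e1 : (pr.map fun uv => indQ uv.1 t).sum
          = (P.map fun u => indQ u t).sum + (N'.map fun u => indQ u t).sum := by
        have h : (pr.map fun uv => indQ uv.1 t) = (pr.map Prod.fst).map fun u => indQ u t :=
          by rw [Multiset.map_map]; rfl
        rw [h, hf, Multiset.map_add, Multiset.sum_add]
      have e2 : (pr.map fun uv => indQ uv.2 t).sum
          = (N.map fun u => indQ u t).sum + (P'.map fun u => indQ u t).sum := by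
        have h : (pr.map fun uv => indQ uv.2 t) = (pr.map Prod.snd).map fun u => indQ u t :=
          by rw [Multiset.map_map]; rfl
        rw [h, hs, Multiset.map_add, Multiset.sum_add]
      rw [msum_sub, e1, e2, h1 t, h2 t]; ring
    calc LHS = ∫⁻ t in box,
          ENNReal.ofReal |(((pr.map fun uv => indQ uv.1 t - indQ uv.2 t).sum : ℤ) : ℝ)| := by
          rw [hLHS]; exact lintegral_congr fun t => by rw [hid t]
      _ ≤ (pr.map fun uv => ∫⁻ t in box,
            ENNReal.ofReal |((indQ uv.1 t : ℝ)) - ((indQ uv.2 t : ℝ))|).sum :=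
          multiset_lintegral_bound box pr
      _ ≤ (pr.map fun uv => K * ENNReal.ofReal (l1 uv.1 uv.2)).sum :=
          Multiset.sum_map_le_sum_map _ _ fun uv _ => pairBound M hM uv.1 uv.2
      _ = K * ENNReal.ofReal ((pr.map fun uv => l1 uv.1 uv.2).sum) := by
          rw [Multiset.sum_map_mul_left]
          congr 1
          exact msum_ofReal pr (fun uv => l1 uv.1 uv.2)
            (fun uv => Finset.sum_nonneg fun i _ => abs_nonneg _)
  rcases Set.eq_empty_or_nonempty Sset with hE | _
  · rw [hsd, hE, sInf_empty, ENNReal.mul_top hK0]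
    exact le_top
  · have h1 : LHS / K ≤ sInf Sset :=
      le_sInf fun c hc => ENNReal.div_le_of_le_mul' (main c hc)
    have h2 := (ENNReal.div_le_iff_le_mul (Or.inl hK0) (Or.inl hKt)).1 h1
    rw [hsd]
    calc LHS ≤ sInf Sset * K := h2
      _ = K * sInf Sset := mul_comm _ _
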